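/- Let p be an odd prime, λ = (λ₁ > λ₂ > … > λ_k ≥ 1) a partition with multiplicities ρ₁, …, ρ_k ≥ 1, A_λ = ⊕_{i=1}^{k} (ℤ/p^{λ_i}ℤ)^{ρ_i} the associated finite abelian p-group, and G_λ = Aut(A_λ). Then H¹(G_λ, A_λ) = 0 for the natural action of G_λ on A_λ. Moreover, for p = 2, H¹(G_λ, A_λ) with the natural action is a finite elementary abelian 2-group (every element is annihilated by 2). -/

import Mathlib

instance AddAut.group (A : Type*) [Add A] : Group (AddAut A) where
  mul g h := AddEquiv.trans h g
  one := AddEquiv.refl _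
  inv := AddEquiv.symm
  mul_assoc _ _ _ := rfl
  one_mul _ := rfl
  mul_one _ := rfl
  inv_mul_cancel := AddEquiv.self_trans_symm

/-- The natural representation of `G = Aut(A)` on the abelian group `A`, given by
`g · a = g(a)`. -/
noncomputable def natRep (A : Type) [AddCommGroup A] : Representation ℤ (AddAut A) A where
  toFun g := AddMonoidHom.toIntLinearMap (AddEquiv.toAddMonoidHom g)
  map_one' := by ext a; rfl
  map_mul' g h := by ext a; rfl

/-- The finite abelian `p`-group `A_λ = ⊕_{i=1}^{k} (ℤ/p^{λ_i}ℤ)^{ρ_i}` associated to a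
partition `λ` with multiplicities `ρ`. -/
abbrev abelianPGroupOfPartition (p k : ℕ) (lam rho : Fin k → ℕ) : Type :=
  (i : Fin k) → Fin (rho i) → ZMod (p ^ lam i)

/-- The negation automorphism `a ↦ -a`. -/
def negAut (M : Type) [AddCommGroup M] : AddAut M :=
  { Equiv.neg M with map_add' := fun a b => neg_add a b }

@[simp] lemma negAut_apply {M : Type} [AddCommGroup M] (a : M) : negAut M a = -a := rfl

lemma negAut_comm {M : Type} [AddCommGroup M] (g : AddAut M) :
    g * negAut M = negAut M * g := by
  ext a
  show g (negAut M a) = negAut M (g a)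
  simp [map_neg]

open groupCohomology in
lemma two_smul_H1_natRep (M : Type) [AddCommGroup M]
    (x : H1 (Rep.of (natRep M))) : (2 : ℤ) • x = 0 := by
  induction x using H1_induction_on with | h f => ?_
  rw [show (2 : ℤ) • H1π (Rep.of (natRep M)) f = H1π (Rep.of (natRep M)) ((2 : ℤ) • f) from
    (map_zsmul (H1π (Rep.of (natRep M))).hom.toAddMonoidHom _ _).symm, H1π_eq_zero_iff]
  have hf := (mem_cocycles₁_iff (A := Rep.of (natRep M)) f.1).1 f.2
  refine ⟨-(f.1 (negAut M)), funext fun g => ?_⟩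
  show (Rep.of (natRep M)).ρ g (-(f.1 (negAut M))) - -(f.1 (negAut M)) = _
  have h1 := hf g (negAut M)
  have h2 := hf (negAut M) g
  rw [← negAut_comm g] at h2
  have hz : (Rep.of (natRep M)).ρ (negAut M) (f.1 g) = -(f.1 g) := rfl
  have key : (Rep.of (natRep M)).ρ g (f.1 (negAut M))
      = -(f.1 g) + f.1 (negAut M) - f.1 g := by
    refine eq_sub_iff_add_eq.2 ?_
    rw [← h1, h2, hz]
  have hrhs : (((2 : ℤ) • f : cocycles₁ (Rep.of (natRep M))) : AddAut M → M) g
      = (2 : ℤ) • (f.1 g) := rfl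
  rw [hrhs, map_neg, key, show ((2 : ℤ) • f.1 g) = f.1 g + f.1 g from two_smul ℤ _]
  abel

open groupCohomology in
lemma smul_H1_natRep_eq_zero (M : Type) [AddCommGroup M] (n : ℕ)
    (hM : ∀ m : M, (n : ℤ) • m = 0)
    (x : H1 (Rep.of (natRep M))) : (n : ℤ) • x = 0 := by
  induction x using H1_induction_on with | h f => ?_
  rw [show (n : ℤ) • H1π (Rep.of (natRep M)) f = H1π (Rep.of (natRep M)) ((n : ℤ) • f) from
    (map_zsmul (H1π (Rep.of (natRep M))).hom.toAddMonoidHom _ _).symm]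
  have hzero : (n : ℤ) • f = 0 := by
    ext g
    show (n : ℤ) • (f.1 g) = 0
    exact hM _
  rw [hzero, map_zero]

open groupCohomology in
/-- For a partition `λ₁ > … > λ_k ≥ 1` with multiplicities `ρᵢ ≥ 1`,
`A_λ = ⊕ (ℤ/p^{λᵢ}ℤ)^{ρᵢ}` and `G_λ = Aut(A_λ)` acting naturally: if `p` is an odd prime
then `H¹(G_λ, A_λ) = 0`; and if `p = 2` then `H¹(G_λ, A_λ)` is a finite elementary
abelian `2`-group. -/
theorem H1_natural_action_of_partition (p k : ℕ) (hp : p.Prime) (hk : 0 < k)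
    (lam rho : Fin k → ℕ) (hlam : StrictAnti lam) (hlam1 : ∀ i, 1 ≤ lam i)
    (hrho : ∀ i, 1 ≤ rho i) :
    (Odd p →
      Subsingleton (H1 (Rep.of (natRep (abelianPGroupOfPartition p k lam rho))))) ∧
    (p = 2 →
      Finite (H1 (Rep.of (natRep (abelianPGroupOfPartition p k lam rho)))) ∧
      ∀ x : H1 (Rep.of (natRep (abelianPGroupOfPartition p k lam rho))),
        (2 : ℤ) • x = 0) := by
  set M := abelianPGroupOfPartition p k lam rho with hM
  set i0 : Fin k := ⟨0, hk⟩ with hi0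
  set n : ℕ := p ^ lam i0 with hn
  have hann : ∀ m : M, (n : ℤ) • m = 0 := by
    intro m
    funext i j
    have hdvd : (p ^ lam i) ∣ n := pow_dvd_pow p (hlam.antitone (by
      show i0 ≤ i
      exact Fin.mk_le_of_le_val (Nat.zero_le _)))
    show (n : ℤ) • (m i j) = 0
    rw [natCast_zsmul, nsmul_eq_mul]
    rw [(ZMod.natCast_eq_zero_iff n (p ^ lam i)).2 hdvd, zero_mul]
  constructor
  · intro hodd
    refine subsingleton_of_forall_eq 0 fun x => ?_
    have h2 : (2 : ℤ) • x = 0 := two_smul_H1_natRep M x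
    have hn0 : (n : ℤ) • x = 0 := smul_H1_natRep_eq_zero M n hann x
    have hnodd : Odd n := hodd.pow
    obtain ⟨t, ht⟩ := hnodd
    have hteq : (n : ℤ) = 2 * t + 1 := by exact_mod_cast congrArg Nat.cast ht
    calc x = ((n : ℤ) - 2 * t) • x := by rw [hteq]; ring_nf; rw [one_smul]
    _ = (n : ℤ) • x - (t : ℤ) • ((2 : ℤ) • x) := by rw [sub_zsmul, mul_comm (2 : ℤ) (t : ℤ), mul_zsmul, sub_eq_add_neg]
    _ = 0 := by rw [h2, hn0, zsmul_zero, sub_zero]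
  · intro hp2
    constructor
    · haveI : ∀ i, NeZero (p ^ lam i) := fun i => NeZero.of_pos (pow_pos hp.pos _)
      haveI hMfin : Finite M := by unfold M; infer_instance
      haveI : Finite (AddAut M) :=
        Finite.of_injective (fun g : AddAut M => (g : M → M)) DFunLike.coe_injective
      haveI : Finite ((Rep.of (natRep M)) : Type) := hMfin
      haveI : Finite (cocycles₁ (Rep.of (natRep M))) := Subtype.finite
      exact Finite.of_surjective _
        ((ModuleCat.epi_iff_surjective (H1π (Rep.of (natRep M)))).1 inferInstance)
    · exact fun x => two_smul_H1_natRep M x
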